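/- Each Krammer representation map ρ(σ_i) is invertible on the free module with basis v_{ij}, 1 ≤ i < j ≤ n; consequently ρ extends to a group homomorphism from the braid group B_n (presented by the Artin relations) to GL of the module. -/

import Mathlib

/-- Index set for the Krammer basis: pairs `(a, b)` with `1 ≤ a < b ≤ n`. -/
def KIdx (n : ℕ) : Type := {p : ℕ × ℕ // 1 ≤ p.1 ∧ p.1 < p.2 ∧ p.2 ≤ n}

/-- The basis vector `v_{a b}` of the free module `KIdx n →₀ R`
(zero if the indices are out of range). -/
noncomputable def kv (R : Type*) [CommRing R] (n a b : ℕ) : KIdx n →₀ R :=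
  if h : 1 ≤ a ∧ a < b ∧ b ≤ n then Finsupp.single ⟨(a, b), h⟩ 1 else 0

/-- The Artin relations for the braid group `B_n`, as elements of the free
group on generators `σ_1, …, σ_{n-1}` (indexed by natural numbers). -/
def braidRels (n : ℕ) : Set (FreeGroup ℕ) :=
  {w | ∃ i j, 1 ≤ i ∧ i + 1 ≤ n ∧ 1 ≤ j ∧ j + 1 ≤ n ∧ i + 2 ≤ j ∧
      w = FreeGroup.of i * FreeGroup.of j * (FreeGroup.of i)⁻¹ *
        (FreeGroup.of j)⁻¹} ∪
  {w | ∃ i, 1 ≤ i ∧ i + 2 ≤ n ∧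
      w = FreeGroup.of i * FreeGroup.of (i+1) * FreeGroup.of i *
        (FreeGroup.of (i+1) * FreeGroup.of i * FreeGroup.of (i+1))⁻¹}

set_option maxHeartbeats 2000000 in
theorem stmt_5_key {R : Type*} [CommRing R] (n : ℕ) (q t : R)
    (ρ : ℕ → ((KIdx n →₀ R) →ₗ[R] (KIdx n →₀ R)))
    (hB : ∀ i a b, 1 ≤ i → i + 1 ≤ n → 1 ≤ a → a < b → b ≤ n →
      i ≠ a → i ≠ b → i + 1 ≠ a → i + 1 ≠ b → ρ i (kv R n a b) = kv R n a b)
    (A : ∀ k a b, 1 ≤ k → k + 1 ≤ n → a = k → b = k + 1 →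
      ρ k (kv R n a b) = (t * q ^ 2) • kv R n k (k+1))
    (C1 : ∀ k a b, 1 ≤ k → a = k + 1 → k + 1 < b → b ≤ n →
      ρ k (kv R n a b) = kv R n k b)
    (C2 : ∀ k a b, 1 ≤ a → a < k → b = k + 1 → k + 1 ≤ n →
      ρ k (kv R n a b) = kv R n a k)
    (D1 : ∀ k a b, 1 ≤ k → a = k → k + 1 < b → b ≤ n →
      ρ k (kv R n a b) = (t*q*(q-1)) • kv R n k (k+1) + (1-q) • kv R n k b
        + q • kv R n (k+1) b)
    (D2 : ∀ k a b, 1 ≤ a → a < k → b = k → k + 1 ≤ n →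
      ρ k (kv R n a b) = (1-q) • kv R n a k + q • kv R n a (k+1)
        + (q*(q-1)) • kv R n k (k+1)) :
    ∀ i a b, 1 ≤ i → i + 1 ≤ n → 1 ≤ a → a < b → b ≤ n →
      (q + t*q^3 - t*q^2) • ρ i (kv R n a b) - ρ i (ρ i (ρ i (kv R n a b)))
        - (q - 1 - t*q^2) • ρ i (ρ i (kv R n a b)) = (t*q^3) • kv R n a b := by
  have nrm : ∀ m : ℕ, m + 1 + 1 = m + 2 := fun _ => rfl
  intro i a b hi hin ha hab hb
  rcases show i = a ∨ i+1 = a ∨ (a ≠ i ∧ a ≠ i+1) by omega with rfl | rfl | ⟨h1, h2⟩ <;>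
    rcases show i = b ∨ i+1 = b ∨ (b ≠ i ∧ b ≠ i+1) by omega with rfl | rfl | ⟨h3, h4⟩ <;>
    first
      | (exfalso; omega)
      | ((simp (disch := omega) only [A, hB, C1, C2, D1, D2, map_add, map_smul, nrm]) <;>
          module)

set_option maxHeartbeats 2000000 in
theorem stmt_5_comm {R : Type*} [CommRing R] (n : ℕ) (q t : R)
    (ρ : ℕ → ((KIdx n →₀ R) →ₗ[R] (KIdx n →₀ R)))
    (hB : ∀ i a b, 1 ≤ i → i + 1 ≤ n → 1 ≤ a → a < b → b ≤ n →
      i ≠ a → i ≠ b → i + 1 ≠ a → i + 1 ≠ b → ρ i (kv R n a b) = kv R n a b)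
    (A : ∀ k a b, 1 ≤ k → k + 1 ≤ n → a = k → b = k + 1 →
      ρ k (kv R n a b) = (t * q ^ 2) • kv R n k (k+1))
    (C1 : ∀ k a b, 1 ≤ k → a = k + 1 → k + 1 < b → b ≤ n →
      ρ k (kv R n a b) = kv R n k b)
    (C2 : ∀ k a b, 1 ≤ a → a < k → b = k + 1 → k + 1 ≤ n →
      ρ k (kv R n a b) = kv R n a k)
    (D1 : ∀ k a b, 1 ≤ k → a = k → k + 1 < b → b ≤ n →
      ρ k (kv R n a b) = (t*q*(q-1)) • kv R n k (k+1) + (1-q) • kv R n k b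
        + q • kv R n (k+1) b)
    (D2 : ∀ k a b, 1 ≤ a → a < k → b = k → k + 1 ≤ n →
      ρ k (kv R n a b) = (1-q) • kv R n a k + q • kv R n a (k+1)
        + (q*(q-1)) • kv R n k (k+1)) :
    ∀ i j, 1 ≤ i → i + 1 ≤ n → 1 ≤ j → j + 1 ≤ n → i + 2 ≤ j →
      ∀ a b, 1 ≤ a → a < b → b ≤ n → (ρ i * ρ j) (kv R n a b) = (ρ j * ρ i) (kv R n a b) := by
  have nrm : ∀ m : ℕ, m + 1 + 1 = m + 2 := fun _ => rfl
  intro i j hi hin hj hjn hij a b ha hab hb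
  simp only [Module.End.mul_apply]
  rcases show i = a ∨ i+1 = a ∨ j = a ∨ j+1 = a ∨ (a ≠ i ∧ a ≠ i+1 ∧ a ≠ j ∧ a ≠ j+1)
      by omega with rfl | rfl | rfl | rfl | ⟨_, _, _, _⟩ <;>
    rcases show i = b ∨ i+1 = b ∨ j = b ∨ j+1 = b ∨ (b ≠ i ∧ b ≠ i+1 ∧ b ≠ j ∧ b ≠ j+1)
      by omega with rfl | rfl | rfl | rfl | ⟨_, _, _, _⟩ <;>
    first
      | (exfalso; omega)
      | ((simp (disch := omega) only [A, hB, C1, C2, D1, D2, map_add, map_smul, nrm]) <;>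
          module)

set_option maxHeartbeats 2000000 in
theorem stmt_5_braid {R : Type*} [CommRing R] (n : ℕ) (q t : R)
    (ρ : ℕ → ((KIdx n →₀ R) →ₗ[R] (KIdx n →₀ R)))
    (hB : ∀ i a b, 1 ≤ i → i + 1 ≤ n → 1 ≤ a → a < b → b ≤ n →
      i ≠ a → i ≠ b → i + 1 ≠ a → i + 1 ≠ b → ρ i (kv R n a b) = kv R n a b)
    (A : ∀ k a b, 1 ≤ k → k + 1 ≤ n → a = k → b = k + 1 →
      ρ k (kv R n a b) = (t * q ^ 2) • kv R n k (k+1))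
    (C1 : ∀ k a b, 1 ≤ k → a = k + 1 → k + 1 < b → b ≤ n →
      ρ k (kv R n a b) = kv R n k b)
    (C2 : ∀ k a b, 1 ≤ a → a < k → b = k + 1 → k + 1 ≤ n →
      ρ k (kv R n a b) = kv R n a k)
    (D1 : ∀ k a b, 1 ≤ k → a = k → k + 1 < b → b ≤ n →
      ρ k (kv R n a b) = (t*q*(q-1)) • kv R n k (k+1) + (1-q) • kv R n k b
        + q • kv R n (k+1) b)
    (D2 : ∀ k a b, 1 ≤ a → a < k → b = k → k + 1 ≤ n →
      ρ k (kv R n a b) = (1-q) • kv R n a k + q • kv R n a (k+1)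
        + (q*(q-1)) • kv R n k (k+1)) :
    ∀ i, 1 ≤ i → i + 2 ≤ n →
      ∀ a b, 1 ≤ a → a < b → b ≤ n → (ρ i * ρ (i+1) * ρ i) (kv R n a b) =
        (ρ (i+1) * ρ i * ρ (i+1)) (kv R n a b) := by
  have nrm : ∀ m : ℕ, m + 1 + 1 = m + 2 := fun _ => rfl
  intro i hi hin a b ha hab hb
  simp only [Module.End.mul_apply]
  rcases show i = a ∨ i+1 = a ∨ i+2 = a ∨ (a ≠ i ∧ a ≠ i+1 ∧ a ≠ i+2)
      by omega with rfl | rfl | rfl | ⟨_, _, _⟩ <;>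
    rcases show i = b ∨ i+1 = b ∨ i+2 = b ∨ (b ≠ i ∧ b ≠ i+1 ∧ b ≠ i+2)
      by omega with rfl | rfl | rfl | ⟨_, _, _⟩ <;>
    first
      | (exfalso; omega)
      | ((simp (disch := omega) only [A, hB, C1, C2, D1, D2, map_add, map_smul, nrm]) <;>
          module)

set_option maxHeartbeats 2000000 in
/-- Each Krammer operator `ρ i` is invertible, and `ρ` extends to a group
homomorphism from the braid group `B_n` (presented by the Artin relations)
to the group of units of the endomorphism ring of the module. -/
theorem stmt_5 {R : Type*} [CommRing R] (n : ℕ) (q t : R)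
    (hq : IsUnit q) (ht : IsUnit t)
    (ρ : ℕ → ((KIdx n →₀ R) →ₗ[R] (KIdx n →₀ R)))
    (hA : ∀ i, 1 ≤ i → i + 1 ≤ n →
      ρ i (kv R n i (i+1)) = (t * q ^ 2) • kv R n i (i+1))
    (hB : ∀ i a b, 1 ≤ i → i + 1 ≤ n → 1 ≤ a → a < b → b ≤ n →
      i ≠ a → i ≠ b → i + 1 ≠ a → i + 1 ≠ b → ρ i (kv R n a b) = kv R n a b)
    (hC1 : ∀ i b, 1 ≤ i → i + 1 < b → b ≤ n → ρ i (kv R n (i+1) b) = kv R n i b)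
    (hC2 : ∀ i a, 1 ≤ a → a < i → i + 1 ≤ n → ρ i (kv R n a (i+1)) = kv R n a i)
    (hD1 : ∀ i b, 1 ≤ i → i + 1 < b → b ≤ n →
      ρ i (kv R n i b) =
        (t * q * (q - 1)) • kv R n i (i+1) + (1 - q) • kv R n i b
          + q • kv R n (i+1) b)
    (hD2 : ∀ i a, 1 ≤ a → a < i → i + 1 ≤ n →
      ρ i (kv R n a i) =
        (1 - q) • kv R n a i + q • kv R n a (i+1)
          + (q * (q - 1)) • kv R n i (i+1)) :
    (∀ i, 1 ≤ i → i + 1 ≤ n → IsUnit (ρ i)) ∧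
    ∃ φ : PresentedGroup (braidRels n) →*
        ((KIdx n →₀ R) →ₗ[R] (KIdx n →₀ R))ˣ,
      ∀ i, 1 ≤ i → i + 1 ≤ n →
        ((φ (PresentedGroup.of i) : ((KIdx n →₀ R) →ₗ[R] (KIdx n →₀ R))ˣ)
          : (KIdx n →₀ R) →ₗ[R] (KIdx n →₀ R)) = ρ i := by
  classical
  have nrm : ∀ m : ℕ, m + 1 + 1 = m + 2 := fun _ => rfl
  -- guarded versions of the hypotheses, suitable for `simp` with `omega` discharger
  have A : ∀ k a b, 1 ≤ k → k + 1 ≤ n → a = k → b = k + 1 →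
      ρ k (kv R n a b) = (t * q ^ 2) • kv R n k (k+1) := by
    rintro k a b h1 h2 rfl rfl; exact hA a h1 h2
  have C1 : ∀ k a b, 1 ≤ k → a = k + 1 → k + 1 < b → b ≤ n →
      ρ k (kv R n a b) = kv R n k b := by
    rintro k a b h1 rfl h3 h4; exact hC1 k b h1 h3 h4
  have C2 : ∀ k a b, 1 ≤ a → a < k → b = k + 1 → k + 1 ≤ n →
      ρ k (kv R n a b) = kv R n a k := by
    rintro k a b h1 h2 rfl h4; exact hC2 k a h1 h2 h4
  have D1 : ∀ k a b, 1 ≤ k → a = k → k + 1 < b → b ≤ n →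
      ρ k (kv R n a b) = (t*q*(q-1)) • kv R n k (k+1) + (1-q) • kv R n k b
        + q • kv R n (k+1) b := by
    rintro k a b h1 rfl h3 h4; exact hD1 a b h1 h3 h4
  have D2 : ∀ k a b, 1 ≤ a → a < k → b = k → k + 1 ≤ n →
      ρ k (kv R n a b) = (1-q) • kv R n a k + q • kv R n a (k+1)
        + (q*(q-1)) • kv R n k (k+1) := by
    rintro k a b h1 h2 rfl h4; exact hD2 b a h1 h2 h4
  -- extensionality on the basis
  have hEnd : ∀ (f g : (KIdx n →₀ R) →ₗ[R] (KIdx n →₀ R)),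
      (∀ a b, 1 ≤ a → a < b → b ≤ n → f (kv R n a b) = g (kv R n a b)) → f = g := by
    intro f g h
    refine Finsupp.lhom_ext fun x r => ?_
    obtain ⟨⟨a, b⟩, hx⟩ := x
    have hs : (Finsupp.single ⟨(a,b), hx⟩ r : KIdx n →₀ R) = r • kv R n a b := by
      rw [kv, dif_pos hx]; exact (Finsupp.smul_single_one _ r).symm
    rw [hs, map_smul, map_smul, h a b hx.1 hx.2.1 hx.2.2]
  -- the cubic identity
  have key : ∀ i a b, 1 ≤ i → i + 1 ≤ n → 1 ≤ a → a < b → b ≤ n →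
      (q + t*q^3 - t*q^2) • ρ i (kv R n a b) - ρ i (ρ i (ρ i (kv R n a b)))
        - (q - 1 - t*q^2) • ρ i (ρ i (kv R n a b)) = (t*q^3) • kv R n a b := by
    exact stmt_5_key n q t ρ hB A C1 C2 D1 D2
  -- explicit units
  have hc : IsUnit (t * q ^ 3) := ht.mul (hq.pow 3)
  have hcc : (↑hc.unit⁻¹ : R) * (t * q ^ 3) = 1 := hc.val_inv_mul
  have hiu : ∀ i, 1 ≤ i → i + 1 ≤ n →
      ∃ u : ((KIdx n →₀ R) →ₗ[R] (KIdx n →₀ R))ˣ, (u : (KIdx n →₀ R) →ₗ[R] (KIdx n →₀ R)) = ρ i := by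
    intro i h1 h2
    set S : (KIdx n →₀ R) →ₗ[R] (KIdx n →₀ R) :=
      (q + t*q^3 - t*q^2) • LinearMap.id - ρ i ∘ₗ ρ i - (q - 1 - t*q^2) • ρ i with hSdef
    have hS1 : ρ i ∘ₗ S = (t * q ^ 3) • LinearMap.id := by
      apply hEnd; intro a b ha hab hb
      simp only [hSdef, LinearMap.comp_apply, LinearMap.sub_apply, LinearMap.smul_apply,
        LinearMap.id_apply, map_sub, map_smul]
      exact key i a b h1 h2 ha hab hb
    have hS2 : S ∘ₗ ρ i = (t * q ^ 3) • LinearMap.id := by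
      apply hEnd; intro a b ha hab hb
      simp only [hSdef, LinearMap.comp_apply, LinearMap.sub_apply, LinearMap.smul_apply,
        LinearMap.id_apply]
      exact key i a b h1 h2 ha hab hb
    refine ⟨⟨ρ i, (↑hc.unit⁻¹ : R) • S, ?_, ?_⟩, rfl⟩
    · show ρ i ∘ₗ ((↑hc.unit⁻¹ : R) • S) = LinearMap.id
      rw [LinearMap.comp_smul, hS1, smul_smul, hcc, one_smul]
    · show ((↑hc.unit⁻¹ : R) • S) ∘ₗ ρ i = LinearMap.id
      rw [LinearMap.smul_comp, hS2, smul_smul, hcc, one_smul]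
  -- far-commutation relation
  have comm : ∀ i j, 1 ≤ i → i + 1 ≤ n → 1 ≤ j → j + 1 ≤ n → i + 2 ≤ j →
      ρ i * ρ j = ρ j * ρ i := by
    intro i j hi hin hj hjn hij
    apply hEnd; intro a b ha hab hb
    exact stmt_5_comm n q t ρ hB A C1 C2 D1 D2 i j hi hin hj hjn hij a b ha hab hb
  -- braid relation
  have braid : ∀ i, 1 ≤ i → i + 2 ≤ n →
      ρ i * ρ (i+1) * ρ i = ρ (i+1) * ρ i * ρ (i+1) := by
    intro i hi hin
    apply hEnd; intro a b ha hab hb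
    exact stmt_5_braid n q t ρ hB A C1 C2 D1 D2 i hi hin a b ha hab hb
  refine ⟨fun i h1 h2 => (hiu i h1 h2).elim fun u hu => ⟨u, hu⟩, ?_⟩
  let f : ℕ → ((KIdx n →₀ R) →ₗ[R] (KIdx n →₀ R))ˣ := fun k =>
    if h : 1 ≤ k ∧ k + 1 ≤ n then (hiu k h.1 h.2).choose else 1
  have hf : ∀ k (h1 : 1 ≤ k) (h2 : k + 1 ≤ n),
      ((f k : ((KIdx n →₀ R) →ₗ[R] (KIdx n →₀ R))ˣ) : (KIdx n →₀ R) →ₗ[R] (KIdx n →₀ R)) = ρ k := by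
    intro k h1 h2
    show ((if h : 1 ≤ k ∧ k + 1 ≤ n then (hiu k h.1 h.2).choose else 1 :
      ((KIdx n →₀ R) →ₗ[R] (KIdx n →₀ R))ˣ) : (KIdx n →₀ R) →ₗ[R] (KIdx n →₀ R)) = ρ k
    rw [dif_pos (⟨h1, h2⟩ : 1 ≤ k ∧ k + 1 ≤ n)]
    exact (hiu k h1 h2).choose_spec
  have hrel : ∀ r ∈ braidRels n, FreeGroup.lift f r = 1 := by
    rintro r (⟨i, j, h1, h2, h3, h4, h5, rfl⟩ | ⟨i, h1, h2, rfl⟩)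
    · simp only [map_mul, map_inv, FreeGroup.lift_apply_of]
      have hco : f i * f j = f j * f i := by
        apply Units.ext
        simp only [Units.val_mul, hf i h1 h2, hf j h3 h4]
        exact comm i j h1 h2 h3 h4 h5
      rw [hco]; group
    · simp only [map_mul, map_inv, FreeGroup.lift_apply_of]
      have hbd : f i * f (i+1) * f i = f (i+1) * f i * f (i+1) := by
        apply Units.ext
        simp only [Units.val_mul, hf i h1 (by omega), hf (i+1) (by omega) h2]
        exact braid i h1 h2
      rw [hbd]; group
  refine ⟨PresentedGroup.toGroup hrel, fun i h1 h2 => ?_⟩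
  rw [PresentedGroup.toGroup.of]
  exact hf i h1 h2
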